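/- arXiv:2102.02422 — 2 statements merged into one kernel-verified Lean document; each statement's English description precedes it below -/
import Mathlib

section
/- For a symmetric positive semi-definite real d×d matrix D and p ≥ 2, the entrywise p-norm and trace satisfy Σ_{i,j} |D_{ij}|^p ≤ (tr D)^p ≤ d^{p-1} Σ_{i,j} |D_{ij}|^p. -/
open Matrix BigOperators

/-- For a symmetric positive semi-definite real d×d matrix `D` and real `p ≥ 2`,
`Σ_{i,j} |D i j|^p ≤ (tr D)^p ≤ d^(p-1) * Σ_{i,j} |D i j|^p`. -/
theorem entrywise_norm_trace_equiv (d : ℕ) (D : Matrix (Fin d) (Fin d) ℝ)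
    (hD : D.PosSemidef) (p : ℝ) (hp : 2 ≤ p) :
    (∑ i, ∑ j, |D i j| ^ p ≤ D.trace ^ p) ∧
      D.trace ^ p ≤ (d : ℝ) ^ (p - 1) * ∑ i, ∑ j, |D i j| ^ p := by
  have hdiag : ∀ i, 0 ≤ D i i := by
    intro i
    have := hD.dotProduct_mulVec_nonneg (Pi.single i 1)
    simpa using this
  have htrace : D.trace = ∑ i, D i i := by
    simp [Matrix.trace, Matrix.diag]
  have htr : 0 ≤ D.trace := by
    rw [htrace]; exact Finset.sum_nonneg fun i _ => hdiag i
  have hij : ∀ i j, |D i j| ^ (2 : ℕ) ≤ D i i * D j j := by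
    intro i j
    rcases eq_or_ne i j with rfl | hij
    · have h := hD.dotProduct_mulVec_nonneg (Pi.single i 1); simp at h
      rw [sq_abs]; nlinarith [h]
    · have key : ∀ t : ℝ, 0 ≤ D i i * (t * t) + (2 * D i j) * t + D j j := by
        intro t
        have h := hD.dotProduct_mulVec_nonneg (t • (Pi.single i 1 : Fin d → ℝ) + Pi.single j 1)
        have hsym : D j i = D i j := by
          have := hD.1; have := congrFun (congrFun this j) i
          simpa [Matrix.conjTranspose_apply] using this.symm
        simp [Matrix.mulVec_add, Matrix.mulVec_smul, dotProduct_add,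
          add_dotProduct, smul_dotProduct, dotProduct_smul, hij, hsym] at h
        nlinarith [h]
      have := discrim_le_zero key
      rw [discrim] at this
      rw [sq_abs]; nlinarith [this]
  set q : ℝ := p / 2 with hq
  have hq1 : 1 ≤ q := by rw [hq]; linarith
  have hq0 : 0 ≤ q := by linarith
  have hqne : q ≠ 0 := by positivity
  -- |D i j|^p ≤ (D i i)^q * (D j j)^q
  have hterm : ∀ i j, |D i j| ^ p ≤ D i i ^ q * D j j ^ q := by
    intro i j
    have h1 : |D i j| ^ p = (|D i j| ^ (2 : ℕ)) ^ q := by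
      rw [← Real.rpow_natCast (|D i j|) 2, ← Real.rpow_mul (abs_nonneg _)]
      congr 1; rw [hq]; ring
    rw [h1, ← Real.mul_rpow (hdiag i) (hdiag j)]
    exact Real.rpow_le_rpow (by positivity) (hij i j) hq0
  -- diagonal sum of q-powers bounded by trace^q
  have hS : ∑ i, D i i ^ q ≤ D.trace ^ q := by
    have hle : ∀ i : Fin d, D i i ^ q ≤ D i i * D.trace ^ (q - 1) := by
      intro i
      have hsplit : D i i ^ q = D i i * D i i ^ (q - 1) := by
        rw [← Real.rpow_one_add' (hdiag i) (by rw [add_sub_cancel]; exact hqne)]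
        ring_nf
      rw [hsplit]
      refine mul_le_mul_of_nonneg_left ?_ (hdiag i)
      exact Real.rpow_le_rpow (hdiag i)
        (htrace ▸ Finset.single_le_sum (fun j _ => hdiag j) (Finset.mem_univ i))
        (by linarith)
    calc ∑ i, D i i ^ q ≤ ∑ i, D i i * D.trace ^ (q - 1) :=
          Finset.sum_le_sum fun i _ => hle i
      _ = D.trace * D.trace ^ (q - 1) := by rw [← Finset.sum_mul, ← htrace]
      _ = D.trace ^ q := by
          rw [← Real.rpow_one_add' htr (by rw [add_sub_cancel]; exact hqne)]
          ring_nf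
  constructor
  · calc ∑ i, ∑ j, |D i j| ^ p ≤ ∑ i, ∑ j, D i i ^ q * D j j ^ q := by
          refine Finset.sum_le_sum fun i _ => Finset.sum_le_sum fun j _ => hterm i j
      _ = (∑ i, D i i ^ q) * (∑ j, D j j ^ q) := by
          rw [Finset.sum_mul_sum]
      _ ≤ D.trace ^ q * D.trace ^ q := by
          have h0 : 0 ≤ ∑ i, D i i ^ q :=
            Finset.sum_nonneg fun i _ => Real.rpow_nonneg (hdiag i) q
          exact mul_le_mul hS hS h0 (Real.rpow_nonneg htr q)
      _ = D.trace ^ p := by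
          rw [← Real.rpow_add' htr (by rw [hq]; intro h; nlinarith)]
          congr 1
          rw [hq]; ring
  · have h1 : D.trace ^ p ≤ (d : ℝ) ^ (p - 1) * ∑ i, D i i ^ p := by
      have := Real.rpow_sum_le_const_mul_sum_rpow_of_nonneg (Finset.univ : Finset (Fin d))
        (f := fun i => D i i) (by linarith : (1:ℝ) ≤ p) (fun i _ => hdiag i)
      simpa [htrace] using this
    refine h1.trans ?_
    refine mul_le_mul_of_nonneg_left ?_ (by positivity)
    refine Finset.sum_le_sum fun i _ => ?_
    calc D i i ^ p = |D i i| ^ p := by rw [abs_of_nonneg (hdiag i)]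
      _ ≤ ∑ j, |D i j| ^ p :=
          Finset.single_le_sum (fun j _ => Real.rpow_nonneg (abs_nonneg _) p)
            (Finset.mem_univ i)
end

section
/- Weak continuity intersection: if X and Y are Banach spaces with X reflexive and continuously embedded in Y, then L^∞(0,T;X) ∩ C_w([0,T];Y) = C_w([0,T];X), where C_w([0,T];Z) denotes functions [0,T] → Z that are weakly continuous. -/
open Set

/-- Weak continuity intersection: if `X` is a reflexive Banach space
continuously (and injectively) embedded in the Banach space `Y` via `j`, then a
function `f : [0,T] → X` is bounded and weakly continuous with values in `Y`
iff it is weakly continuous with values in `X`: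
`L^∞(0,T;X) ∩ C_w([0,T];Y) = C_w([0,T];X)`. -/
theorem weak_continuity_intersection
    (X Y : Type*)
    [NormedAddCommGroup X] [NormedSpace ℝ X] [CompleteSpace X]
    [NormedAddCommGroup Y] [NormedSpace ℝ Y] [CompleteSpace Y]
    (hrefl : Function.Surjective (NormedSpace.inclusionInDoubleDual ℝ X))
    (j : X →L[ℝ] Y) (hj : Function.Injective j)
    (T : ℝ) (hT : 0 < T) (f : ℝ → X) :
    ((∃ M : ℝ, ∀ t ∈ Icc (0 : ℝ) T, ‖f t‖ ≤ M) ∧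
        ∀ ψ : Y →L[ℝ] ℝ, ContinuousOn (fun t => ψ (j (f t))) (Icc (0 : ℝ) T)) ↔
      ∀ φ : X →L[ℝ] ℝ, ContinuousOn (fun t => φ (f t)) (Icc (0 : ℝ) T) := by
  -- the linear map `ψ ↦ ψ ∘ j` from `Y*` to `X*`
  set L : (Y →L[ℝ] ℝ) →ₗ[ℝ] (X →L[ℝ] ℝ) :=
    { toFun := fun ψ => ψ.comp j
      map_add' := fun ψ₁ ψ₂ => ContinuousLinearMap.add_comp ψ₁ ψ₂ j
      map_smul' := fun c ψ => ContinuousLinearMap.smul_comp c ψ j } with hL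
  set S : Submodule ℝ (X →L[ℝ] ℝ) := LinearMap.range L with hS
  -- Density of the range of the adjoint: key use of reflexivity and injectivity
  have hdense : ∀ φ : X →L[ℝ] ℝ, φ ∈ closure (S : Set (X →L[ℝ] ℝ)) := by
    intro φ
    by_contra hφ
    obtain ⟨Φ, u, hΦu, hu⟩ := geometric_hahn_banach_point_closed
      ((S.convex).closure) isClosed_closure hφ
    -- Φ vanishes on S
    have hΦS : ∀ g ∈ S, Φ g = 0 := by
      intro g hg
      by_contra hne
      have hmem : ((u - 1) / Φ g) • g ∈ closure (S : Set (X →L[ℝ] ℝ)) :=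
        subset_closure (S.smul_mem _ hg)
      have := hu _ hmem
      rw [map_smul] at this
      simp only [smul_eq_mul] at this
      rw [div_mul_cancel₀ _ hne] at this
      linarith
    have hu0 : u < 0 := by
      have := hu 0 (subset_closure S.zero_mem)
      simpa using this
    obtain ⟨x, hx⟩ := hrefl Φ
    have hxg : ∀ g : X →L[ℝ] ℝ, g x = Φ g := by
      intro g
      rw [← hx]; rfl
    have hjx : j x = 0 := by
      apply NormedSpace.eq_zero_of_forall_dual_eq_zero ℝ
      intro ψ
      have : (ψ.comp j) x = 0 := by
        rw [hxg]
        exact hΦS _ ⟨ψ, rfl⟩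
      simpa using this
    have hx0 : x = 0 := hj (by simpa using hjx)
    have : Φ φ = 0 := by rw [← hxg, hx0, map_zero]
    linarith
  constructor
  · rintro ⟨⟨M, hM⟩, hw⟩ φ
    have hM0 : 0 ≤ M := le_trans (norm_nonneg _) (hM 0 ⟨le_refl _, hT.le⟩)
    -- choose approximating sequence
    have happrox : ∀ n : ℕ, ∃ ψ : Y →L[ℝ] ℝ, ‖φ - ψ.comp j‖ < 1 / (n + 1) := by
      intro n
      have := Metric.mem_closure_iff.mp (hdense φ) (1 / (n + 1)) (by positivity)
      obtain ⟨g, hg, hd⟩ := this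
      obtain ⟨ψ, rfl⟩ := hg
      exact ⟨ψ, by rwa [dist_eq_norm] at hd⟩
    choose ψ hψ using happrox
    have hunif : TendstoUniformlyOn (fun n t => (ψ n) (j (f t)))
        (fun t => φ (f t)) Filter.atTop (Icc (0 : ℝ) T) := by
      rw [Metric.tendstoUniformlyOn_iff]
      intro ε hε
      have htend : Filter.Tendsto (fun n : ℕ => (1 / ((n : ℝ) + 1)) * M)
          Filter.atTop (nhds 0) := by
        simpa using tendsto_one_div_add_atTop_nhds_zero_nat.mul_const M
      filter_upwards [htend.eventually (gt_mem_nhds hε)] with n hn t ht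
      have hle : dist (φ (f t)) ((ψ n) (j (f t))) ≤ (1 / ((n : ℝ) + 1)) * M := by
        rw [dist_eq_norm]
        have : φ (f t) - (ψ n) (j (f t)) = (φ - (ψ n).comp j) (f t) := by simp
        rw [this]
        calc ‖(φ - (ψ n).comp j) (f t)‖ ≤ ‖φ - (ψ n).comp j‖ * ‖f t‖ :=
              ContinuousLinearMap.le_opNorm _ _
          _ ≤ (1 / ((n : ℝ) + 1)) * M := by
              apply mul_le_mul (hψ n).le (hM t ht) (norm_nonneg _) (by positivity)
      exact lt_of_le_of_lt hle hn
    exact hunif.continuousOn (Filter.Eventually.of_forall (f := Filter.atTop) fun n => hw (ψ n)).frequently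
  · intro h
    refine ⟨?_, fun ψ => h (ψ.comp j)⟩
    -- boundedness via Banach–Steinhaus
    have hpt : ∀ φ : X →L[ℝ] ℝ, ∃ C, ∀ t : Icc (0 : ℝ) T,
        ‖(NormedSpace.inclusionInDoubleDual ℝ X (f t)) φ‖ ≤ C := by
      intro φ
      have hco : ContinuousOn (fun t => ‖φ (f t)‖) (Icc (0 : ℝ) T) :=
        (h φ).norm
      obtain ⟨t₀, _, ht₀⟩ := isCompact_Icc.exists_isMaxOn
        (nonempty_Icc.mpr hT.le) hco
      refine ⟨‖φ (f t₀)‖, fun t => ?_⟩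
      have := ht₀ t.2
      simpa [NormedSpace.dual_def] using this
    obtain ⟨C, hC⟩ := banach_steinhaus
      (g := fun t : Icc (0 : ℝ) T => NormedSpace.inclusionInDoubleDual ℝ X (f t))
      (fun φ => hpt φ)
    refine ⟨C, fun t ht => ?_⟩
    have : ‖NormedSpace.inclusionInDoubleDual ℝ X (f t)‖ = ‖f t‖ :=
      (NormedSpace.inclusionInDoubleDualLi ℝ (E := X)).norm_map (f t)
    rw [← this]
    exact hC ⟨t, ht⟩
end
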